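/- For each $d \in \mathbb{Z}_{++}$, the set $S_d = \{(a,b) \in \R^2 : x^{2d} + ax^2 + b \ge 0 \; \forall x \in \R\}$ intersected with $\{b \ge 0\}$ admits the relative entropy representation $S_d \cap (\R \times \R_+) = \{(a,b) \in \R \times \R_+ : \exists \nu \in \R^2_+ \text{ s.t. } D(\nu, e(1,b)') \le a \text{ and } (d-1)\nu_1 = \nu_2\}$. -/

import Mathlib

open Finset


lemma key (s y u : ℝ) (hs : 0 ≤ s) (hy : 0 < y) :
    s * u ≤ y * Real.exp u + s * Real.log (s / (Real.exp 1 * y)) := by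
  rcases eq_or_lt_of_le hs with h | h
  · simp [← h]
    positivity
  · have hlog : Real.log (s / (Real.exp 1 * y)) = Real.log s - 1 - Real.log y := by
      rw [Real.log_div (ne_of_gt h) (by positivity), Real.log_mul (by positivity) (ne_of_gt hy),
        Real.log_exp]
      ring
    set r := u - (Real.log s - Real.log y) with hr
    have h1 : r + 1 ≤ Real.exp r := Real.add_one_le_exp r
    have h2 : y * Real.exp u = s * Real.exp r := by
      have : Real.exp u = Real.exp r * (s / y) := by
        rw [← Real.exp_log (show (0:ℝ) < s / y by positivity), ← Real.exp_add,
          Real.log_div (ne_of_gt h) (ne_of_gt hy)]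
        ring_nf
        rw [hr]; ring_nf
      rw [this]; field_simp
    rw [h2, hlog]
    nlinarith [mul_le_mul_of_nonneg_left h1 hs]


noncomputable def relEnt {ℓ : ℕ} (ν lam : Fin ℓ → ℝ) : EReal :=
  ∑ j, if ν j = 0 then (0 : EReal) else if lam j = 0 then (⊤ : EReal)
    else ((ν j * Real.log (ν j / lam j) : ℝ) : EReal)

lemma aux_fwd (d : ℕ) (hd : 1 ≤ d) (a b : ℝ) (hb : 0 ≤ b) (ν : Fin 2 → ℝ)
    (hν : ∀ i, 0 ≤ ν i)
    (hD : relEnt ν (fun i => Real.exp 1 * (if i = 0 then 1 else b)) ≤ (a : EReal))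
    (hlin : ((d : ℝ) - 1) * ν 0 = ν 1) (x : ℝ) :
    0 ≤ x ^ (2 * d) + a * x ^ 2 + b := by
  rcases eq_or_ne x 0 with rfl | hx
  · have h0 : (0:ℝ) ^ (2*d) = 0 := zero_pow (by omega)
    simpa [h0] using hb
  have hx2 : 0 < x ^ 2 := by positivity
  set t := Real.log (x ^ 2) with htdef
  have ht : x ^ 2 = Real.exp t := (Real.exp_log hx2).symm
  -- unpack hD
  simp only [relEnt, Fin.sum_univ_two, show ((1:Fin 2) = 0) = False by simp, show ((0:Fin 2) = 0) = True by simp, if_true, if_false, mul_one, if_neg (Real.exp_ne_zero 1)] at hD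
  set R0 : ℝ := if ν 0 = 0 then 0 else ν 0 * Real.log (ν 0 / Real.exp 1) with hR0
  set R1 : ℝ := if ν 1 = 0 then 0 else ν 1 * Real.log (ν 1 / (Real.exp 1 * b)) with hR1
  have hterm0 : (if ν 0 = 0 then (0:EReal) else ((ν 0 * Real.log (ν 0 / Real.exp 1) : ℝ) : EReal))
      = ((R0 : ℝ) : EReal) := by
    by_cases h : ν 0 = 0 <;> simp [hR0, h]
  have hb1 : ν 1 ≠ 0 → 0 < b := by
    intro h1
    rcases lt_or_eq_of_le hb with h | h
    · exact h
    · exfalso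
      rw [hterm0, ← h, if_neg h1, if_pos (mul_zero (Real.exp 1)),
        EReal.add_top_of_ne_bot (EReal.coe_ne_bot R0)] at hD
      simp at hD
  have hterm1 : (if ν 1 = 0 then (0:EReal) else if Real.exp 1 * b = 0 then (⊤:EReal)
      else ((ν 1 * Real.log (ν 1 / (Real.exp 1 * b)) : ℝ) : EReal)) = ((R1 : ℝ) : EReal) := by
    by_cases h : ν 1 = 0
    · simp [hR1, h]
    · have hbpos := hb1 h
      have : Real.exp 1 * b ≠ 0 := by positivity
      simp [hR1, h, this]
  rw [hterm0, hterm1, ← EReal.coe_add] at hD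
  have hDr : R0 + R1 ≤ a := EReal.coe_le_coe_iff.mp hD
  have k0 : ν 0 * (((d:ℝ)-1)*t) ≤ Real.exp (((d:ℝ)-1)*t) + R0 := by
    by_cases h : ν 0 = 0
    · simp [h, hR0, (Real.exp_pos _).le]
    · have := key (ν 0) 1 (((d:ℝ)-1)*t) (hν 0) one_pos
      simp only [hR0, if_neg h, mul_one, one_mul] at this ⊢
      linarith
  have k1 : ν 1 * (-t) ≤ b * Real.exp (-t) + R1 := by
    by_cases h : ν 1 = 0
    · simp [h, hR1]
      positivity
    · have := key (ν 1) b (-t) (hν 1) (hb1 h)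
      simp only [hR1, if_neg h] at this ⊢
      linarith
  have hzero : ν 0 * (((d:ℝ)-1)*t) + ν 1 * (-t) = 0 := by
    rw [← hlin]; ring
  have hsum : -a ≤ Real.exp (((d:ℝ)-1)*t) + b * Real.exp (-t) := by linarith
  have hE : Real.exp (((d:ℝ)-1)*t) * Real.exp t = Real.exp ((d:ℝ)*t) := by
    rw [← Real.exp_add]; ring_nf
  have hInv : Real.exp (-t) * Real.exp t = 1 := by
    rw [← Real.exp_add]; simp
  have hxpow : x ^ (2*d) = Real.exp ((d:ℝ)*t) := by
    rw [pow_mul, ht, ← Real.exp_nat_mul]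
  have := mul_le_mul_of_nonneg_right hsum (Real.exp_pos t).le
  rw [ht, hxpow]
  nlinarith [Real.exp_pos t]

lemma aux_bwd (d : ℕ) (hd : 1 ≤ d) (a b : ℝ) (hb : 0 ≤ b)
    (hpos : ∀ x : ℝ, 0 ≤ x ^ (2 * d) + a * x ^ 2 + b) :
    ∃ ν : Fin 2 → ℝ, (∀ i, 0 ≤ ν i) ∧
      relEnt ν (fun i => Real.exp 1 * (if i = 0 then 1 else b)) ≤ (a : EReal) ∧
      ((d : ℝ) - 1) * ν 0 = ν 1 := by
  rcases le_or_gt 0 a with ha | ha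
  · refine ⟨fun _ => 0, fun i => le_refl 0, ?_, by ring⟩
    simp only [relEnt, Fin.sum_univ_two]
    norm_num
    exact_mod_cast ha
  rcases eq_or_lt_of_le hd with hd1 | hd2
  · -- d = 1
    subst hd1
    have ha1 : -1 ≤ a := by
      by_contra h
      push_neg at h
      set s := Real.sqrt (b / (-1 - a)) with hs
      have hsn : 0 ≤ s := Real.sqrt_nonneg _
      have hne : (-1 - a) ≠ 0 := by linarith
      have hs2 : s ^ 2 * (-1 - a) = b := by
        rw [hs, Real.sq_sqrt (div_nonneg hb (by linarith))]
        exact div_mul_cancel₀ b hne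
      have := hpos (s + 1)
      norm_num at this
      nlinarith
    refine ⟨fun i => if i = 0 then Real.exp (1 + a) else 0, ?_, ?_, by norm_num⟩
    · intro i
      by_cases h : i = 0 <;> simp [h, (Real.exp_pos _).le]
    · simp only [relEnt, Fin.sum_univ_two, show ((1:Fin 2) = 0) = False by simp,
        show ((0:Fin 2) = 0) = True by simp, if_true, if_false, mul_one,
        if_neg (Real.exp_ne_zero (1 + a)), if_neg (Real.exp_ne_zero 1), if_pos rfl, add_zero]
      have hlog : Real.log (Real.exp (1 + a) / Real.exp 1) = a := by
        rw [Real.log_div (Real.exp_ne_zero _) (Real.exp_ne_zero _), Real.log_exp,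
          Real.log_exp]
        ring
      rw [hlog, EReal.coe_le_coe_iff]
      nlinarith [Real.one_le_exp (show (0:ℝ) ≤ 1 + a by linarith)]
  · -- d ≥ 2
    have hc : (0:ℝ) < (d:ℝ) - 1 := by
      have : (2:ℝ) ≤ (d:ℝ) := by exact_mod_cast hd2
      linarith
    set c : ℝ := (d:ℝ) - 1 with hcdef
    have hbpos : 0 < b := by
      rcases eq_or_lt_of_le hb with h | h
      · exfalso
        have hsq : 0 < Real.sqrt (-a) := Real.sqrt_pos.mpr (by linarith)
        set x := min 1 (Real.sqrt (-a)) / 2 with hxdef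
        have hx0 : 0 < x := by positivity
        have hx1 : x ≤ 1 := by
          have := min_le_left 1 (Real.sqrt (-a))
          rw [hxdef]; linarith
        have hxsq : x ^ 2 ≤ -a / 4 := by
          have h1 : x ≤ Real.sqrt (-a) / 2 := by
            have := min_le_right 1 (Real.sqrt (-a))
            rw [hxdef]; linarith
          have h2 : x ^ 2 ≤ (Real.sqrt (-a) / 2) ^ 2 := by
            apply pow_le_pow_left₀ hx0.le h1
          have h3 : (Real.sqrt (-a) / 2) ^ 2 = -a / 4 := by
            rw [div_pow, Real.sq_sqrt (by linarith : (0:ℝ) ≤ -a)]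
            norm_num
          linarith
        have hpow : x ^ (2 * (d - 1)) ≤ x ^ 2 :=
          pow_le_pow_of_le_one hx0.le hx1 (by omega)
        have hsplit : x ^ (2 * d) = x ^ 2 * x ^ (2 * (d - 1)) := by
          rw [← pow_add]; congr 1; omega
        have hx2 : 0 < x ^ 2 := by positivity
        have hA : x ^ (2 * (d-1)) + a ≤ 3 * a / 4 := by linarith
        have h4 := hpos x
        rw [hsplit, ← h] at h4
        nlinarith [mul_le_mul_of_nonneg_left hA hx2.le]
      · exact h
    set m : ℝ := -a / (d : ℝ) with hmdef
    have hdpos : (0:ℝ) < (d:ℝ) := by positivity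
    have hm : 0 < m := div_pos (by linarith) hdpos
    set t : ℝ := m ^ ((1:ℝ)/c) with htdef
    have htpos : 0 < t := Real.rpow_pos_of_pos hm _
    have htd : t ^ d = m ^ ((d:ℝ)/c) := by
      rw [htdef, ← Real.rpow_natCast (m ^ ((1:ℝ)/c)) d, ← Real.rpow_mul hm.le]
      congr 1
      field_simp
    have hadm : a = -((d:ℝ) * m) := by
      rw [hmdef]; field_simp
    have hat : a * t = -(d:ℝ) * m ^ ((d:ℝ)/c) := by
      rw [hadm, htdef, show -((d:ℝ)*m) * m ^ ((1:ℝ)/c) = -(d:ℝ) * (m * m ^ ((1:ℝ)/c)) by ring]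
      congr 1
      rw [← Real.rpow_one_add' hm.le (by positivity)]
      congr 1
      field_simp
      ring
    have hkey : m ^ ((d:ℝ)/c) ≤ b / c := by
      have h4 := hpos (Real.sqrt t)
      rw [pow_mul, Real.sq_sqrt htpos.le, htd] at h4
      rw [hat] at h4
      rw [le_div_iff₀ hc]
      have hdc : (d:ℝ) = c + 1 := by rw [hcdef]; ring
      nlinarith
    have hms : m ≤ (b / c) ^ (c / (d:ℝ)) := by
      have h5 : (m ^ ((d:ℝ)/c)) ^ (c/(d:ℝ)) ≤ (b/c) ^ (c/(d:ℝ)) :=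
        Real.rpow_le_rpow (by positivity) hkey (by positivity)
      rwa [← Real.rpow_mul hm.le, show ((d:ℝ)/c) * (c/(d:ℝ)) = 1 by field_simp,
        Real.rpow_one] at h5
    set s : ℝ := (b / c) ^ (c / (d:ℝ)) with hsdef
    have hspos : 0 < s := Real.rpow_pos_of_pos (by positivity) _
    refine ⟨fun i => if i = 0 then s else c * s, ?_, ?_, by norm_num⟩
    · intro i
      by_cases h : i = 0 <;> simp [h, hspos.le, (mul_pos hc hspos).le]
    · simp only [relEnt, Fin.sum_univ_two, show ((1:Fin 2) = 0) = False by simp,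
        show ((0:Fin 2) = 0) = True by simp, if_true, if_false, mul_one,
        if_neg (ne_of_gt hspos), if_neg (ne_of_gt (mul_pos hc hspos)),
        if_neg (Real.exp_ne_zero 1), if_neg (show Real.exp 1 * b ≠ 0 by positivity)]
      rw [← EReal.coe_add, EReal.coe_le_coe_iff]
      have hlogs : Real.log s = (c/(d:ℝ)) * (Real.log b - Real.log c) := by
        rw [hsdef, Real.log_rpow (by positivity), Real.log_div (ne_of_gt hbpos) (ne_of_gt hc)]
      have h1 : Real.log (s / Real.exp 1) = Real.log s - 1 := by
        rw [Real.log_div (ne_of_gt hspos) (Real.exp_ne_zero 1), Real.log_exp]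
      have h2 : Real.log (c * s / (Real.exp 1 * b)) =
          Real.log c + Real.log s - (1 + Real.log b) := by
        rw [Real.log_div (by positivity) (by positivity), Real.log_mul (ne_of_gt hc)
          (ne_of_gt hspos), Real.log_mul (Real.exp_ne_zero 1) (ne_of_gt hbpos), Real.log_exp]
      rw [h1, h2]
      have hdc : (d:ℝ) = c + 1 := by rw [hcdef]; ring
      have hval : s * (Real.log s - 1) + c * s * (Real.log c + Real.log s - (1 + Real.log b))
          = -(d:ℝ) * s := by
        rw [hlogs, hdc]
        have hd0 : (c:ℝ) + 1 ≠ 0 := by linarith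
        field_simp
        ring
      rw [hval]
      have : (d:ℝ) * m ≤ (d:ℝ) * s := by
        apply mul_le_mul_of_nonneg_left hms hdpos.le
      rw [hadm]
      linarith

theorem stmt13 (d : ℕ) (hd : 1 ≤ d) :
    {p : ℝ × ℝ | ∀ x : ℝ, 0 ≤ x ^ (2 * d) + p.1 * x ^ 2 + p.2} ∩
      {p : ℝ × ℝ | 0 ≤ p.2} =
    {p : ℝ × ℝ | 0 ≤ p.2 ∧ ∃ ν : Fin 2 → ℝ, (∀ i, 0 ≤ ν i) ∧
      relEnt ν (fun i => Real.exp 1 * (if i = 0 then 1 else p.2)) ≤ (p.1 : EReal) ∧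
      ((d : ℝ) - 1) * ν 0 = ν 1} := by
  ext ⟨a, b⟩
  simp only [Set.mem_inter_iff, Set.mem_setOf_eq]
  constructor
  · rintro ⟨hpos, hb⟩
    exact ⟨hb, aux_bwd d hd a b hb hpos⟩
  · rintro ⟨hb, ν, hν, hD, hlin⟩
    exact ⟨fun x => aux_fwd d hd a b hb ν hν hD hlin x, hb⟩
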